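/- Let n, m, m̃, ñ be positive integers, Φ ∈ ℝ^{n×m}, S ∈ ℝ^{m×m}, σ² > 0, and let C ∈ ℝ^{m×m} be lower triangular with positive diagonal entries c_{rr}; set Σ = CCᵀ and define L_Σ(C) = (1/σ²)·Σ_{entries}((ΦC)²) + tr(SΣ) − log det Σ. Let ĩ, j̃, r̃ ∈ {1,…,m}^{m̃} and ℓ̃ ∈ {1,…,n}^{ñ} be random index vectors with i.i.d. uniform entries, mutually independent. Then the estimator (m/m̃) Σ_{r ∈ r̃} [ (nm²/(σ²ñm̃²)) c_{j̃,r}ᵀ Φ_{ℓ̃,j̃}ᵀ Φ_{ℓ̃,ĩ} c_{ĩ,r} + (m²/m̃²) c_{j̃,r}ᵀ S_{j̃,ĩ} c_{ĩ,r} − 2 log c_{rr} ] is unbiased: its expectation over ĩ, j̃, r̃, ℓ̃ equals L_Σ(C). Here c_r denotes the r-th column of C and c_{ũ,r} its subvector at indices ũ. -/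

import Mathlib

open Matrix BigOperators


section QSVIAux
open Finset


lemma sum_eval {N k : ℕ} [NeZero N] (a : Fin k) (g : Fin N → ℝ) :
    ∑ f : Fin k → Fin N, g (f a) = (N : ℝ)^(k-1) * ∑ x, g x := by
  classical
  have h1 : ∑ f : Fin k → Fin N, g (f a)
      = ∑ p : Fin N × ({ j : Fin k // j ≠ a } → Fin N), g p.1 :=
    Fintype.sum_equiv (Equiv.funSplitAt a (Fin N)) _ _ (fun f => rfl)
  rw [h1, Fintype.sum_prod_type]
  simp [Finset.sum_const, mul_comm]
  rw [Finset.sum_mul]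

lemma quadT {N k M l : ℕ} [NeZero N] [NeZero M]
    (F : Fin N → Fin N → Fin N → Fin M → ℝ) :
    ∑ ii : Fin k → Fin N, ∑ jj : Fin k → Fin N, ∑ rr : Fin k → Fin N,
      ∑ ll : Fin l → Fin M, ∑ a : Fin k, ∑ b : Fin k, ∑ c : Fin k, ∑ t : Fin l,
        F (rr a) (jj b) (ii c) (ll t)
    = (k:ℝ) * k * k * l * (N:ℝ)^(k-1) * (N:ℝ)^(k-1) * (N:ℝ)^(k-1) * (M:ℝ)^(l-1) *
        ∑ i : Fin N, ∑ j : Fin N, ∑ r : Fin N, ∑ x : Fin M, F r j i x := by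
  classical
  -- bubble a,b,c,t to the outside
  conv_lhs => enter [2, ii, 2, jj, 2, rr]; rw [Finset.sum_comm]
  conv_lhs => enter [2, ii, 2, jj]; rw [Finset.sum_comm]
  conv_lhs => enter [2, ii]; rw [Finset.sum_comm]
  conv_lhs => rw [Finset.sum_comm]
  -- now: ∑ a, ∑ ii, ∑ jj, ∑ rr, ∑ ll, ∑ b, ∑ c, ∑ t, ...
  conv_lhs => enter [2, a, 2, ii, 2, jj, 2, rr]; rw [Finset.sum_comm]
  conv_lhs => enter [2, a, 2, ii, 2, jj]; rw [Finset.sum_comm]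
  conv_lhs => enter [2, a, 2, ii]; rw [Finset.sum_comm]
  conv_lhs => enter [2, a]; rw [Finset.sum_comm]
  -- ∑ a, ∑ b, ∑ ii, ∑ jj, ∑ rr, ∑ ll, ∑ c, ∑ t
  conv_lhs => enter [2, a, 2, b, 2, ii, 2, jj, 2, rr]; rw [Finset.sum_comm]
  conv_lhs => enter [2, a, 2, b, 2, ii, 2, jj]; rw [Finset.sum_comm]
  conv_lhs => enter [2, a, 2, b, 2, ii]; rw [Finset.sum_comm]
  conv_lhs => enter [2, a, 2, b]; rw [Finset.sum_comm]
  -- ∑ a, ∑ b, ∑ c, ∑ ii, ∑ jj, ∑ rr, ∑ ll, ∑ t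
  conv_lhs => enter [2, a, 2, b, 2, c, 2, ii, 2, jj, 2, rr]; rw [Finset.sum_comm]
  conv_lhs => enter [2, a, 2, b, 2, c, 2, ii, 2, jj]; rw [Finset.sum_comm]
  conv_lhs => enter [2, a, 2, b, 2, c, 2, ii]; rw [Finset.sum_comm]
  conv_lhs => enter [2, a, 2, b, 2, c]; rw [Finset.sum_comm]
  -- now ∑ a, ∑ b, ∑ c, ∑ t, ∑ ii, ∑ jj, ∑ rr, ∑ ll, F (rr a) (jj b) (ii c) (ll t)
  have key : ∀ (a b c : Fin k) (t : Fin l),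
      (∑ ii : Fin k → Fin N, ∑ jj : Fin k → Fin N, ∑ rr : Fin k → Fin N,
        ∑ ll : Fin l → Fin M, F (rr a) (jj b) (ii c) (ll t))
      = (N:ℝ)^(k-1) * ∑ i : Fin N, ((N:ℝ)^(k-1) * ∑ j : Fin N, ((N:ℝ)^(k-1) *
          ∑ r : Fin N, ((M:ℝ)^(l-1) * ∑ x : Fin M, F r j i x))) := by
    intro a b c t
    have hll : ∀ (u v w : Fin N),
        (∑ ll : Fin l → Fin M, F u v w (ll t)) = (M:ℝ)^(l-1) * ∑ x, F u v w x :=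
      fun u v w => sum_eval t _
    have hrr : ∀ (u v : Fin N),
        (∑ rr : Fin k → Fin N, ((M:ℝ)^(l-1) * ∑ x, F (rr a) u v x))
        = (N:ℝ)^(k-1) * ∑ r, ((M:ℝ)^(l-1) * ∑ x, F r u v x) :=
      fun u v => sum_eval a (fun r => (M:ℝ)^(l-1) * ∑ x, F r u v x)
    have hjj : ∀ (v : Fin N),
        (∑ jj : Fin k → Fin N, ((N:ℝ)^(k-1) * ∑ r, ((M:ℝ)^(l-1) * ∑ x, F r (jj b) v x)))
        = (N:ℝ)^(k-1) * ∑ j, ((N:ℝ)^(k-1) * ∑ r, ((M:ℝ)^(l-1) * ∑ x, F r j v x)) :=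
      fun v => sum_eval b (fun j => (N:ℝ)^(k-1) * ∑ r, ((M:ℝ)^(l-1) * ∑ x, F r j v x))
    have hii :
        (∑ ii : Fin k → Fin N, ((N:ℝ)^(k-1) * ∑ j, ((N:ℝ)^(k-1) * ∑ r, ((M:ℝ)^(l-1) *
            ∑ x, F r j (ii c) x))))
        = (N:ℝ)^(k-1) * ∑ i, ((N:ℝ)^(k-1) * ∑ j, ((N:ℝ)^(k-1) * ∑ r, ((M:ℝ)^(l-1) *
            ∑ x, F r j i x))) :=
      sum_eval c (fun i => (N:ℝ)^(k-1) * ∑ j, ((N:ℝ)^(k-1) * ∑ r, ((M:ℝ)^(l-1) *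
            ∑ x, F r j i x)))
    simp only [hll, hrr, hjj, hii]
  simp only [key, Finset.sum_const, Finset.card_univ, Fintype.card_fin, nsmul_eq_mul]
  simp only [Finset.mul_sum]
  ring_nf

lemma tripT {N k : ℕ} [NeZero N] (F : Fin N → Fin N → Fin N → ℝ) :
    ∑ ii : Fin k → Fin N, ∑ jj : Fin k → Fin N, ∑ rr : Fin k → Fin N,
      ∑ a : Fin k, ∑ b : Fin k, ∑ c : Fin k, F (rr a) (jj b) (ii c)
    = (k:ℝ) * k * k * (N:ℝ)^(k-1) * (N:ℝ)^(k-1) * (N:ℝ)^(k-1) *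
        ∑ i : Fin N, ∑ j : Fin N, ∑ r : Fin N, F r j i := by
  classical
  conv_lhs => enter [2, ii, 2, jj]; rw [Finset.sum_comm]
  conv_lhs => enter [2, ii]; rw [Finset.sum_comm]
  conv_lhs => rw [Finset.sum_comm]
  conv_lhs => enter [2, a, 2, ii, 2, jj]; rw [Finset.sum_comm]
  conv_lhs => enter [2, a, 2, ii]; rw [Finset.sum_comm]
  conv_lhs => enter [2, a]; rw [Finset.sum_comm]
  conv_lhs => enter [2, a, 2, b, 2, ii, 2, jj]; rw [Finset.sum_comm]
  conv_lhs => enter [2, a, 2, b, 2, ii]; rw [Finset.sum_comm]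
  conv_lhs => enter [2, a, 2, b]; rw [Finset.sum_comm]
  have key : ∀ (a b c : Fin k),
      (∑ ii : Fin k → Fin N, ∑ jj : Fin k → Fin N, ∑ rr : Fin k → Fin N,
        F (rr a) (jj b) (ii c))
      = (N:ℝ)^(k-1) * ∑ i : Fin N, ((N:ℝ)^(k-1) * ∑ j : Fin N, ((N:ℝ)^(k-1) *
          ∑ r : Fin N, F r j i)) := by
    intro a b c
    have hrr : ∀ (u v : Fin N),
        (∑ rr : Fin k → Fin N, F (rr a) u v) = (N:ℝ)^(k-1) * ∑ r, F r u v :=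
      fun u v => sum_eval a (fun r => F r u v)
    have hjj : ∀ (v : Fin N),
        (∑ jj : Fin k → Fin N, ((N:ℝ)^(k-1) * ∑ r, F r (jj b) v))
        = (N:ℝ)^(k-1) * ∑ j, ((N:ℝ)^(k-1) * ∑ r, F r j v) :=
      fun v => sum_eval b (fun j => (N:ℝ)^(k-1) * ∑ r, F r j v)
    have hii :
        (∑ ii : Fin k → Fin N, ((N:ℝ)^(k-1) * ∑ j, ((N:ℝ)^(k-1) * ∑ r, F r j (ii c))))
        = (N:ℝ)^(k-1) * ∑ i, ((N:ℝ)^(k-1) * ∑ j, ((N:ℝ)^(k-1) * ∑ r, F r j i)) :=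
      sum_eval c (fun i => (N:ℝ)^(k-1) * ∑ j, ((N:ℝ)^(k-1) * ∑ r, F r j i))
    simp only [hrr, hjj, hii]
  simp only [key, Finset.sum_const, Finset.card_univ, Fintype.card_fin, nsmul_eq_mul]
  simp only [Finset.mul_sum]
  ring_nf

lemma oneT {N k : ℕ} [NeZero N] (g : Fin N → ℝ) :
    ∑ rr : Fin k → Fin N, ∑ a : Fin k, g (rr a)
    = (k:ℝ) * (N:ℝ)^(k-1) * ∑ r : Fin N, g r := by
  rw [Finset.sum_comm]
  simp only [sum_eval, Finset.sum_const, Finset.card_univ, Fintype.card_fin,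
    nsmul_eq_mul]
  ring

lemma tripT' {N k M l : ℕ} [NeZero N] [NeZero M]
    (F : Fin N → Fin N → Fin N → ℝ) :
    ∑ ii : Fin k → Fin N, ∑ jj : Fin k → Fin N, ∑ rr : Fin k → Fin N,
      ∑ _ll : Fin l → Fin M, ∑ a : Fin k, ∑ b : Fin k, ∑ c : Fin k,
        F (rr a) (jj b) (ii c)
    = (M:ℝ)^l * ((k:ℝ) * k * k * (N:ℝ)^(k-1) * (N:ℝ)^(k-1) * (N:ℝ)^(k-1) *
        ∑ i : Fin N, ∑ j : Fin N, ∑ r : Fin N, F r j i) := by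
  have hc : ∀ (x : ℝ), (∑ _ll : Fin l → Fin M, x) = (M:ℝ)^l * x := by
    intro x
    simp [Finset.sum_const, Finset.card_univ, Fintype.card_fun, Fintype.card_fin]
  simp only [hc, ← Finset.mul_sum]
  rw [tripT F]

lemma oneT' {N k M l : ℕ} [NeZero N] [NeZero M] (g : Fin N → ℝ) :
    ∑ _ii : Fin k → Fin N, ∑ _jj : Fin k → Fin N, ∑ rr : Fin k → Fin N,
      ∑ _ll : Fin l → Fin M, ∑ a : Fin k, g (rr a)
    = (N:ℝ)^k * ((N:ℝ)^k * ((M:ℝ)^l * ((k:ℝ) * (N:ℝ)^(k-1) * ∑ r : Fin N, g r))) := by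
  have hc : ∀ (x : ℝ), (∑ _ll : Fin l → Fin M, x) = (M:ℝ)^l * x := by
    intro x
    simp [Finset.sum_const, Finset.card_univ, Fintype.card_fun, Fintype.card_fin]
  have hc2 : ∀ (x : ℝ), (∑ _f : Fin k → Fin N, x) = (N:ℝ)^k * x := by
    intro x
    simp [Finset.sum_const, Finset.card_univ, Fintype.card_fun, Fintype.card_fin]
  simp only [hc, ← Finset.mul_sum, oneT g, hc2]

lemma pull4 {α β γ δ : Type*} [Fintype α] [Fintype β] [Fintype γ] [Fintype δ]
    (c : ℝ) (f : α → β → γ → δ → ℝ) :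
    ∑ i1 : α, ∑ i2 : β, ∑ i3 : γ, ∑ i4 : δ, c * f i1 i2 i3 i4
    = c * ∑ i1 : α, ∑ i2 : β, ∑ i3 : γ, ∑ i4 : δ, f i1 i2 i3 i4 := by
  simp only [← Finset.mul_sum]


end QSVIAux

/-- Theorem 2 of the paper: the quadruply stochastic estimator of the
variational-covariance objective
`L_Σ(C) = (1/σ²)·Σ_entries((ΦC)²) + tr(SΣ) − log det Σ`, with `Σ = CCᵀ` and `C` lower
triangular with positive diagonal, is unbiased.  Here `m'` plays the role of `m̃` and `n'`
of `ñ`; the random index vectors `ii, jj, rr : Fin m' → Fin m` and `ll : Fin n' → Fin n`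
have i.i.d. uniform entries and are mutually independent, formalized by taking the
expectation to be the uniform average over all such index functions. -/
theorem quadruply_stochastic_cov_estimator_unbiased
    (n m m' n' : ℕ) (hn : 0 < n) (hm : 0 < m) (hm' : 0 < m') (hn' : 0 < n')
    (Φ : Matrix (Fin n) (Fin m) ℝ) (S : Matrix (Fin m) (Fin m) ℝ)
    (σ2 : ℝ) (hσ : 0 < σ2)
    (C : Matrix (Fin m) (Fin m) ℝ)
    (hlow : ∀ i j : Fin m, i < j → C i j = 0)
    (hdiag : ∀ r : Fin m, 0 < C r r) :
    (∑ ii : Fin m' → Fin m, ∑ jj : Fin m' → Fin m, ∑ rr : Fin m' → Fin m,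
        ∑ ll : Fin n' → Fin n,
        ((m : ℝ) / m') * ∑ a : Fin m',
          (((n : ℝ) * m ^ 2 / (σ2 * n' * m' ^ 2)) *
              ((fun b => C (jj b) (rr a)) ⬝ᵥ
                ((Φ.submatrix ll jj)ᵀ * Φ.submatrix ll ii) *ᵥ (fun b => C (ii b) (rr a)))
            + ((m : ℝ) ^ 2 / (m' : ℝ) ^ 2) *
              ((fun b => C (jj b) (rr a)) ⬝ᵥ (S.submatrix jj ii) *ᵥ
                (fun b => C (ii b) (rr a)))
            - 2 * Real.log (C (rr a) (rr a))))
      / ((Fintype.card (Fin m' → Fin m) : ℝ) * (Fintype.card (Fin m' → Fin m)) *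
          (Fintype.card (Fin m' → Fin m)) * (Fintype.card (Fin n' → Fin n)))
    = (1 / σ2) * (∑ i : Fin n, ∑ j : Fin m, ((Φ * C) i j) ^ 2)
        + (S * (C * Cᵀ)).trace - Real.log (C * Cᵀ).det := by
  classical
  haveI : NeZero m := ⟨hm.ne'⟩
  haveI : NeZero n := ⟨hn.ne'⟩
  haveI : Nonempty (Fin m) := ⟨⟨0, hm⟩⟩
  haveI : Nonempty (Fin n) := ⟨⟨0, hn⟩⟩
  -- pointwise rewriting of the estimator into flattened sums
  have point : ∀ (ii jj rr : Fin m' → Fin m) (ll : Fin n' → Fin n),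
      (((m : ℝ) / m') * ∑ a : Fin m',
          (((n : ℝ) * m ^ 2 / (σ2 * n' * m' ^ 2)) *
              ((fun b => C (jj b) (rr a)) ⬝ᵥ
                ((Φ.submatrix ll jj)ᵀ * Φ.submatrix ll ii) *ᵥ (fun b => C (ii b) (rr a)))
            + ((m : ℝ) ^ 2 / (m' : ℝ) ^ 2) *
              ((fun b => C (jj b) (rr a)) ⬝ᵥ (S.submatrix jj ii) *ᵥ
                (fun b => C (ii b) (rr a)))
            - 2 * Real.log (C (rr a) (rr a))))
      = (((m : ℝ) / m') * ((n : ℝ) * m ^ 2 / (σ2 * n' * m' ^ 2))) *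
          (∑ a : Fin m', ∑ b : Fin m', ∑ c : Fin m', ∑ t : Fin n',
            C (jj b) (rr a) * (Φ (ll t) (jj b) * Φ (ll t) (ii c) * C (ii c) (rr a)))
        + (((m : ℝ) / m') * ((m : ℝ) ^ 2 / (m' : ℝ) ^ 2)) *
          (∑ a : Fin m', ∑ b : Fin m', ∑ c : Fin m',
            C (jj b) (rr a) * (S (jj b) (ii c) * C (ii c) (rr a)))
        - (((m : ℝ) / m') * 2) *
          (∑ a : Fin m', Real.log (C (rr a) (rr a))) := by
    intro ii jj rr ll
    simp only [dotProduct, mulVec, Matrix.mul_apply, Matrix.transpose_apply,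
      Matrix.submatrix_apply, Finset.sum_sub_distrib, Finset.sum_add_distrib,
      Finset.mul_sum, Finset.sum_mul, mul_sub, mul_add]
    ring_nf
  -- denominator
  have hcard1 : ((Fintype.card (Fin m' → Fin m)) : ℝ) = (m:ℝ)^m' := by
    rw [Fintype.card_fun]; push_cast [Fintype.card_fin]; ring
  have hcard2 : ((Fintype.card (Fin n' → Fin n)) : ℝ) = (n:ℝ)^n' := by
    rw [Fintype.card_fun]; push_cast [Fintype.card_fin]; ring
  have hm0 : (0:ℝ) < (m:ℝ) := by exact_mod_cast hm
  have hn0 : (0:ℝ) < (n:ℝ) := by exact_mod_cast hn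
  have hm'0 : (0:ℝ) < (m':ℝ) := by exact_mod_cast hm'
  have hn'0 : (0:ℝ) < (n':ℝ) := by exact_mod_cast hn'
  have hD : ((Fintype.card (Fin m' → Fin m) : ℝ) * (Fintype.card (Fin m' → Fin m)) *
      (Fintype.card (Fin m' → Fin m)) * (Fintype.card (Fin n' → Fin n))) ≠ 0 := by
    rw [hcard1, hcard2]
    positivity
  rw [div_eq_iff hD, hcard1, hcard2]
  simp only [point]
  simp only [Finset.sum_add_distrib, Finset.sum_sub_distrib]
  have hP1 :
      (∑ ii : Fin m' → Fin m, ∑ jj : Fin m' → Fin m, ∑ rr : Fin m' → Fin m,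
        ∑ ll : Fin n' → Fin n,
        (↑m / ↑m' * (↑n * ↑m ^ 2 / (σ2 * ↑n' * ↑m' ^ 2))) *
          ∑ a : Fin m', ∑ b : Fin m', ∑ c : Fin m', ∑ t : Fin n',
            C (jj b) (rr a) * (Φ (ll t) (jj b) * Φ (ll t) (ii c) * C (ii c) (rr a)))
      = (↑m / ↑m' * (↑n * ↑m ^ 2 / (σ2 * ↑n' * ↑m' ^ 2))) *
        ∑ ii : Fin m' → Fin m, ∑ jj : Fin m' → Fin m, ∑ rr : Fin m' → Fin m,
          ∑ ll : Fin n' → Fin n, ∑ a : Fin m', ∑ b : Fin m', ∑ c : Fin m', ∑ t : Fin n',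
            C (jj b) (rr a) * (Φ (ll t) (jj b) * Φ (ll t) (ii c) * C (ii c) (rr a)) :=
    pull4 _ _
  have hP2 :
      (∑ ii : Fin m' → Fin m, ∑ jj : Fin m' → Fin m, ∑ rr : Fin m' → Fin m,
        ∑ _ll : Fin n' → Fin n,
        (↑m / ↑m' * (↑m ^ 2 / ↑m' ^ 2)) *
          ∑ a : Fin m', ∑ b : Fin m', ∑ c : Fin m',
            C (jj b) (rr a) * (S (jj b) (ii c) * C (ii c) (rr a)))
      = (↑m / ↑m' * (↑m ^ 2 / ↑m' ^ 2)) *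
        ∑ ii : Fin m' → Fin m, ∑ jj : Fin m' → Fin m, ∑ rr : Fin m' → Fin m,
          ∑ _ll : Fin n' → Fin n, ∑ a : Fin m', ∑ b : Fin m', ∑ c : Fin m',
            C (jj b) (rr a) * (S (jj b) (ii c) * C (ii c) (rr a)) :=
    pull4 _ _
  have hP3 :
      (∑ _ii : Fin m' → Fin m, ∑ _jj : Fin m' → Fin m, ∑ rr : Fin m' → Fin m,
        ∑ _ll : Fin n' → Fin n,
        (↑m / ↑m' * 2) * ∑ a : Fin m', Real.log (C (rr a) (rr a)))
      = (↑m / ↑m' * 2) *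
        ∑ _ii : Fin m' → Fin m, ∑ _jj : Fin m' → Fin m, ∑ rr : Fin m' → Fin m,
          ∑ _ll : Fin n' → Fin n, ∑ a : Fin m', Real.log (C (rr a) (rr a)) :=
    pull4 _ _
  rw [hP1, hP2, hP3]
  rw [quadT (fun r j i x => C j r * (Φ x j * Φ x i * C i r)),
    tripT' (fun r j i => C j r * (S j i * C i r)),
    oneT' (l := n') (M := n) (fun r => Real.log (C r r))]
  -- right-hand side rewrites
  have hRHS1 : (∑ i : Fin n, ∑ j : Fin m, ((Φ * C) i j) ^ 2)
      = ∑ i : Fin m, ∑ j : Fin m, ∑ r : Fin m, ∑ x : Fin n,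
          C j r * (Φ x j * Φ x i * C i r) := by
    have h1 : ∀ (x : Fin n) (r : Fin m), ((Φ * C) x r)^2
        = ∑ j : Fin m, ∑ i : Fin m, (Φ x j * C j r) * (Φ x i * C i r) := by
      intro x r
      rw [pow_two, Matrix.mul_apply, Finset.sum_mul_sum]
    simp only [h1]
    -- reorder (x, r, j, i) -> (i, j, r, x)
    conv_lhs => enter [2, x, 2, r]; rw [Finset.sum_comm]
    conv_lhs => enter [2, x]; rw [Finset.sum_comm]
    conv_lhs => rw [Finset.sum_comm]
    conv_lhs => enter [2, i, 2, x]; rw [Finset.sum_comm]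
    conv_lhs => enter [2, i]; rw [Finset.sum_comm]
    conv_lhs => enter [2, i, 2, j]; rw [Finset.sum_comm]
    refine Finset.sum_congr rfl fun i _ => Finset.sum_congr rfl fun j _ =>
      Finset.sum_congr rfl fun r _ => Finset.sum_congr rfl fun x _ => by ring
  have hRHS2 : (S * (C * Cᵀ)).trace
      = ∑ i : Fin m, ∑ j : Fin m, ∑ r : Fin m, C j r * (S j i * C i r) := by
    simp only [Matrix.trace, Matrix.diag, Matrix.mul_apply, Matrix.transpose_apply,
      Finset.mul_sum]
    rw [Finset.sum_comm]
    refine Finset.sum_congr rfl fun i _ => Finset.sum_congr rfl fun j _ =>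
      Finset.sum_congr rfl fun r _ => by ring
  have hprodpos : (0:ℝ) < ∏ r : Fin m, C r r := Finset.prod_pos (fun r _ => hdiag r)
  have hRHS3 : Real.log (C * Cᵀ).det = 2 * ∑ r : Fin m, Real.log (C r r) := by
    have hdetC : C.det = ∏ r : Fin m, C r r := by
      apply Matrix.det_of_lowerTriangular
      intro i j h
      exact hlow i j (by simpa using h)
    rw [Matrix.det_mul, Matrix.det_transpose, hdetC, ← pow_two, Real.log_pow,
      Real.log_prod (fun r _ => (hdiag r).ne')]
    push_cast
    ring
  rw [hRHS1, hRHS2, hRHS3]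
  -- final arithmetic
  have hpm : (m:ℝ)^m' = (m:ℝ)^(m'-1) * m := by
    conv_lhs => rw [show m' = (m'-1)+1 by omega]
    rw [pow_succ]
  have hpn : (n:ℝ)^n' = (n:ℝ)^(n'-1) * n := by
    conv_lhs => rw [show n' = (n'-1)+1 by omega]
    rw [pow_succ]
  rw [hpm, hpn]
  field_simp
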